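/- Let λ ≥ 0.79 be real and let T be a 2-primitive set of integers greater than 1 such that for every prime p ∈ 𝒫(T) one has Σ_{t∈T, p∣t} t^{−λ} > p^{−λ}. Then every t ∈ T has at least 3 prime factors counted with multiplicity, i.e., Ω(t) ≥ 3. -/

import Mathlib

open scoped BigOperators ENNReal

/-- `primesOf A` is the set `𝒫(A)` of primes dividing some member of `A`. -/
def primesOf (A : Set ℕ) : Set ℕ := {p : ℕ | p.Prime ∧ ∃ n ∈ A, p ∣ n}

/-- A set of integers greater than 1 is *primitive* if no element divides another. -/
def Primitive (A : Set ℕ) : Prop :=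
  (∀ n ∈ A, 1 < n) ∧ ∀ a ∈ A, ∀ b ∈ A, a ≠ b → ¬a ∣ b

/-- A set `A` of integers greater than 1 with `|A| ≥ k + 1` is *k-primitive* if no element
divides the product of `k` distinct other elements of `A`. -/
def KPrimitive (k : ℕ) (A : Set ℕ) : Prop :=
  (∀ n ∈ A, 1 < n) ∧ (k : ℕ∞) + 1 ≤ A.encard ∧
    ∀ a ∈ A, ∀ B : Finset ℕ, ↑B ⊆ A \ {a} → B.card = k → ¬a ∣ ∏ b ∈ B, b

private lemma rpow_neg_anti {lam : ℝ} (hlam : 0 ≤ lam) {x y : ℝ} (hx : 0 < x) (hxy : x ≤ y) :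
    y ^ (-lam) ≤ x ^ (-lam) := by
  have hy : 0 < y := lt_of_lt_of_le hx hxy
  rw [Real.rpow_neg hx.le, Real.rpow_neg hy.le]
  have h1 : 0 < x ^ lam := Real.rpow_pos_of_pos hx lam
  have h2 : x ^ lam ≤ y ^ lam := Real.rpow_le_rpow hx.le hxy hlam
  exact inv_anti₀ h1 h2

private lemma rpow_num_bound {b : ℕ} (hb : 0 < b) (c : ℝ) (hc : 0 ≤ c)
    (hkey : ((b : ℝ) ^ (79 : ℕ))⁻¹ ≤ c ^ (100 : ℕ)) :
    (b : ℝ) ^ (-(0.79 : ℝ)) ≤ c := by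
  have hb' : (0:ℝ) < (b:ℝ) := by exact_mod_cast hb
  have key : ((b:ℝ) ^ (-(0.79:ℝ))) ^ (100:ℕ) ≤ c ^ (100:ℕ) := by
    have e1 : ((b:ℝ) ^ (-(0.79:ℝ))) ^ (100:ℕ) = (b:ℝ) ^ (-(79:ℝ)) := by
      rw [← Real.rpow_natCast ((b:ℝ) ^ (-(0.79:ℝ))) 100, ← Real.rpow_mul hb'.le]
      norm_num
    have e2 : (b:ℝ) ^ (-(79:ℝ)) = ((b:ℝ) ^ (79:ℕ))⁻¹ := by
      rw [show (-(79:ℝ)) = ((-79 : ℤ) : ℝ) by norm_num, Real.rpow_intCast]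
      rw [show ((-79 : ℤ)) = -(79:ℕ) by norm_num, zpow_neg, zpow_natCast]
    rw [e1, e2]
    exact hkey
  exact le_of_pow_le_pow_left₀ (by norm_num) hc key

private lemma two_rpow_bound : (2:ℝ) ^ (-(0.79:ℝ)) ≤ 0.579 := by
  have := rpow_num_bound (b := 2) (by norm_num) 0.579 (by norm_num) (by norm_num)
  simpa using this

private lemma three_rpow_bound : (3:ℝ) ^ (-(0.79:ℝ)) ≤ 0.421 := by
  have := rpow_num_bound (b := 3) (by norm_num) 0.421 (by norm_num) (by norm_num)
  simpa using this

private lemma key_sum {lam : ℝ} (hlam : (0.79:ℝ) ≤ lam) {p m : ℕ} (hp : 2 ≤ p) (hm : 2 ≤ m)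
    (h2 : p = 2 → 3 ≤ m) : (p:ℝ) ^ (-lam) + (m:ℝ) ^ (-lam) ≤ 1 := by
  have hlam0 : (0:ℝ) ≤ lam := le_trans (by norm_num) hlam
  have hexp : ∀ x : ℝ, 1 ≤ x → x ^ (-lam) ≤ x ^ (-(0.79:ℝ)) := fun x hx =>
    Real.rpow_le_rpow_of_exponent_le hx (neg_le_neg hlam)
  have h23 : (2:ℝ) ^ (-lam) + (3:ℝ) ^ (-lam) ≤ 1 := by
    calc (2:ℝ)^(-lam) + (3:ℝ)^(-lam)
        ≤ (2:ℝ)^(-(0.79:ℝ)) + (3:ℝ)^(-(0.79:ℝ)) :=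
          add_le_add (hexp 2 (by norm_num)) (hexp 3 (by norm_num))
      _ ≤ 0.579 + 0.421 := add_le_add two_rpow_bound three_rpow_bound
      _ = 1 := by norm_num
  rcases eq_or_lt_of_le hp with hp2 | hp3
  · have hm3 : 3 ≤ m := h2 hp2.symm
    have h1 : (p:ℝ) ^ (-lam) = (2:ℝ) ^ (-lam) := by rw [← hp2]; norm_num
    have h2' : (m:ℝ) ^ (-lam) ≤ (3:ℝ) ^ (-lam) :=
      rpow_neg_anti hlam0 (by norm_num) (by exact_mod_cast hm3)
    calc (p:ℝ)^(-lam) + (m:ℝ)^(-lam) ≤ (2:ℝ)^(-lam) + (3:ℝ)^(-lam) := by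
          rw [h1]; exact add_le_add_right h2' _
      _ ≤ 1 := h23
  · have hp3' : 3 ≤ p := hp3
    have h1 : (p:ℝ) ^ (-lam) ≤ (3:ℝ) ^ (-lam) :=
      rpow_neg_anti hlam0 (by norm_num) (by exact_mod_cast hp3')
    have h2' : (m:ℝ) ^ (-lam) ≤ (2:ℝ) ^ (-lam) :=
      rpow_neg_anti hlam0 (by norm_num) (by exact_mod_cast hm)
    calc (p:ℝ)^(-lam) + (m:ℝ)^(-lam) ≤ (3:ℝ)^(-lam) + (2:ℝ)^(-lam) := add_le_add h1 h2'
      _ = (2:ℝ)^(-lam) + (3:ℝ)^(-lam) := add_comm _ _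
      _ ≤ 1 := h23

private lemma tsum_le_single (f : ℕ → ℝ≥0∞) (S : Set ℕ) (a : ℕ) (hS : S ⊆ {a}) :
    ∑' x : S, f x ≤ f a :=
  calc ∑' x : S, f x ≤ ∑' x : ({a} : Set ℕ), f x := ENNReal.tsum_mono_subtype f hS
    _ = f a := tsum_singleton a f

private lemma tsum_le_pair (f : ℕ → ℝ≥0∞) (S : Set ℕ) (a b : ℕ) (hab : a ≠ b)
    (hS : S ⊆ {a, b}) : ∑' x : S, f x ≤ f a + f b := by
  have e : ∑' x : ({a, b} : Set ℕ), f x = f a + f b := by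
    rw [show ({a, b} : Set ℕ) = (↑({a, b} : Finset ℕ) : Set ℕ) by simp]
    rw [Finset.tsum_subtype', Finset.sum_pair hab]
  calc ∑' x : S, f x ≤ ∑' x : ({a, b} : Set ℕ), f x := ENNReal.tsum_mono_subtype f hS
    _ = f a + f b := e

/-- If `T` is 2-primitive, `λ ≥ 0.79`, and `∑_{t ∈ T_p} t^{-λ} > p^{-λ}` for each
`p ∈ 𝒫(T)`, then every `t ∈ T` satisfies `Ω(t) ≥ 3`, where `Ω` counts prime factors
with multiplicity. -/
theorem omega_ge_three (lam : ℝ) (hlam : 0.79 ≤ lam) (T : Set ℕ) (hT : KPrimitive 2 T)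
    (h : ∀ p ∈ primesOf T,
      ENNReal.ofReal (((p : ℕ) : ℝ) ^ (-lam)) <
        ∑' t : {t : ℕ | t ∈ T ∧ p ∣ t}, ENNReal.ofReal (((t : ℕ) : ℝ) ^ (-lam))) :
    ∀ t ∈ T, 3 ≤ t.primeFactorsList.length := by
  obtain ⟨h1, hcard, hdiv⟩ := hT
  have hlam0 : (0:ℝ) ≤ lam := le_trans (by norm_num) hlam
  set f : ℕ → ℝ≥0∞ := fun n => ENNReal.ofReal ((n:ℝ) ^ (-lam)) with hf
  -- there is always a third element
  have hthird : ∀ a ∈ T, ∀ s ∈ T, s ≠ a → ∃ c ∈ T, c ≠ a ∧ c ≠ s := by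
    intro a ha s hs hsa
    by_contra hc
    push_neg at hc
    have hsub : T ⊆ {a, s} := by
      intro x hx
      rcases eq_or_ne x a with rfl | hxa
      · exact Set.mem_insert _ _
      · exact Set.mem_insert_of_mem _ (hc x hx hxa)
    have h2 : T.encard ≤ 2 := by
      calc T.encard ≤ ({a, s} : Set ℕ).encard := Set.encard_mono hsub
        _ = 2 := Set.encard_pair hsa.symm
    have h3 : (2:ℕ∞) + 1 ≤ 2 := hcard.trans h2
    norm_num at h3
  -- no element divides another
  have hA : ∀ a ∈ T, ∀ s ∈ T, s ≠ a → ¬ a ∣ s := by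
    intro a ha s hs hsa hdvd
    obtain ⟨c, hcT, hca, hcs⟩ := hthird a ha s hs hsa
    have hsc : s ≠ c := fun e => hcs e.symm
    refine hdiv a ha {s, c} ?_ (Finset.card_pair hsc) ?_
    · intro x hx
      simp only [Finset.coe_insert, Finset.coe_singleton, Set.mem_insert_iff,
        Set.mem_singleton_iff] at hx
      rcases hx with rfl | rfl
      · exact ⟨hs, hsa⟩
      · exact ⟨hcT, hca⟩
    · rw [Finset.prod_pair hsc]
      exact hdvd.mul_right c
  -- no element divides the product of two distinct others
  have hA2 : ∀ a ∈ T, ∀ b ∈ T, ∀ c ∈ T, b ≠ a → c ≠ a → b ≠ c → ¬ a ∣ b * c := by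
    intro a ha b hb c hc hba hca hbc hdvd
    refine hdiv a ha {b, c} ?_ (Finset.card_pair hbc) ?_
    · intro x hx
      simp only [Finset.coe_insert, Finset.coe_singleton, Set.mem_insert_iff,
        Set.mem_singleton_iff] at hx
      rcases hx with rfl | rfl
      · exact ⟨hb, hba⟩
      · exact ⟨hc, hca⟩
    · rwa [Finset.prod_pair hbc]
  have hmono : ∀ x y : ℕ, 0 < x → x ≤ y → f y ≤ f x := by
    intro x y hx hxy
    exact ENNReal.ofReal_le_ofReal
      (rpow_neg_anti hlam0 (by exact_mod_cast hx) (by exact_mod_cast hxy))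
  intro t ht
  by_contra hlen
  push_neg at hlen
  have ht1 : 1 < t := h1 t ht
  have ht0 : t ≠ 0 := by omega
  -- every prime factor of t has another multiple in T
  have hsecond : ∀ r : ℕ, r.Prime → r ∣ t → ∃ s ∈ T, s ≠ t ∧ r ∣ s := by
    intro r hr hrt
    by_contra hc
    push_neg at hc
    have hrP : r ∈ primesOf T := ⟨hr, t, ht, hrt⟩
    have hsub : {x : ℕ | x ∈ T ∧ r ∣ x} ⊆ {t} := by
      rintro x ⟨hxT, hrx⟩
      by_contra hxt
      exact hc x hxT (by simpa using hxt) hrx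
    have hle : (∑' x : {x : ℕ | x ∈ T ∧ r ∣ x}, f x) ≤ f t := tsum_le_single f _ t hsub
    have hrt' : r ≤ t := Nat.le_of_dvd (by omega) hrt
    exact absurd (h r hrP) (not_lt.mpr (hle.trans (hmono r t hr.pos hrt')))
  have hprod : t.primeFactorsList.prod = t := Nat.prod_primeFactorsList ht0
  have hmem : ∀ r ∈ t.primeFactorsList, r.Prime := fun r hr =>
    Nat.prime_of_mem_primeFactorsList hr
  have hlen' : t.primeFactorsList.length = 0 ∨ t.primeFactorsList.length = 1 ∨
      t.primeFactorsList.length = 2 := by omega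
  rcases hlen' with h0 | h1' | h2'
  · rw [List.length_eq_zero_iff] at h0
    rw [h0] at hprod
    simp at hprod
    omega
  · obtain ⟨p, hpL⟩ := List.length_eq_one_iff.mp h1'
    have hp : p.Prime := hmem p (by rw [hpL]; simp)
    have hpt : p = t := by rw [hpL] at hprod; simpa using hprod
    obtain ⟨s, hsT, hst, hps⟩ := hsecond p hp (hpt ▸ dvd_refl p)
    exact hA t ht s hsT hst (hpt ▸ hps)
  · obtain ⟨p, q, hpqL⟩ := List.length_eq_two.mp h2'
    have hp : p.Prime := hmem p (by rw [hpqL]; simp)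
    have hq : q.Prime := hmem q (by rw [hpqL]; simp)
    have hpqt : p * q = t := by rw [hpqL] at hprod; simpa [mul_assoc] using hprod
    have hpt : p ∣ t := ⟨q, hpqt.symm⟩
    have hqt : q ∣ t := ⟨p, by rw [← hpqt]; ring⟩
    by_cases hpq : p = q
    · -- t = p * p
      subst hpq
      have hpP : p ∈ primesOf T := ⟨hp, t, ht, hpt⟩
      have htp : t ≠ p := by nlinarith [hp.two_le]
      have hpT : p ∉ T := fun hpT => hA p hpT t ht htp hpt
      obtain ⟨s, hsT, hst, hps⟩ := hsecond p hp hpt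
      have hts : ¬ t ∣ s := hA t ht s hsT hst
      obtain ⟨m, hm⟩ := hps
      have hpm : ¬ p ∣ m := by
        rintro ⟨k, hk⟩
        exact hts ⟨k, by rw [hm, hk, ← hpqt]; ring⟩
      have hm1 : m ≠ 1 := by
        rintro rfl
        rw [mul_one] at hm
        exact hpT (hm ▸ hsT)
      have hm0 : m ≠ 0 := by
        rintro rfl
        rw [mul_zero] at hm
        have := h1 s hsT
        omega
      have hm2 : 2 ≤ m := by omega
      have hmp2 : p = 2 → 3 ≤ m := by
        rintro rfl
        rcases Nat.lt_or_ge m 3 with h' | h'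
        · have hm2' : m = 2 := by omega
          subst hm2'
          exact absurd ⟨1, rfl⟩ hpm
        · exact h'
      have hsub : {x : ℕ | x ∈ T ∧ p ∣ x} ⊆ {t, s} := by
        rintro x ⟨hxT, hpx⟩
        by_contra hx
        simp only [Set.mem_insert_iff, Set.mem_singleton_iff, not_or] at hx
        have : t ∣ x * s := by
          rw [← hpqt]
          exact mul_dvd_mul hpx ⟨m, hm⟩
        exact hA2 t ht x hxT s hsT hx.1 hst hx.2 this
      have hle : (∑' x : {x : ℕ | x ∈ T ∧ p ∣ x}, f x) ≤ f t + f s :=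
        tsum_le_pair f _ t s (Ne.symm hst) hsub
      have hnum : (t:ℝ)^(-lam) + (s:ℝ)^(-lam) ≤ (p:ℝ)^(-lam) := by
        have htc : (t:ℝ) = (p:ℝ) * (p:ℝ) := by exact_mod_cast hpqt.symm
        have hsc : (s:ℝ) = (p:ℝ) * (m:ℝ) := by exact_mod_cast hm
        have hp0 : (0:ℝ) ≤ (p:ℝ) := by positivity
        have hm0' : (0:ℝ) ≤ (m:ℝ) := by positivity
        rw [htc, hsc, Real.mul_rpow hp0 hp0, Real.mul_rpow hp0 hm0']
        have hks := key_sum hlam hp.two_le hm2 hmp2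
        calc (p:ℝ)^(-lam) * (p:ℝ)^(-lam) + (p:ℝ)^(-lam) * (m:ℝ)^(-lam)
            = (p:ℝ)^(-lam) * ((p:ℝ)^(-lam) + (m:ℝ)^(-lam)) := by ring
          _ ≤ (p:ℝ)^(-lam) * 1 :=
              mul_le_mul_of_nonneg_left hks (Real.rpow_nonneg hp0 _)
          _ = (p:ℝ)^(-lam) := mul_one _
      have hle2 : f t + f s ≤ f p := by
        rw [hf]
        simp only
        rw [← ENNReal.ofReal_add (Real.rpow_nonneg (by positivity) _)
          (Real.rpow_nonneg (by positivity) _)]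
        exact ENNReal.ofReal_le_ofReal hnum
      exact absurd (h p hpP) (not_lt.mpr (hle.trans hle2))
    · -- p ≠ q
      obtain ⟨sp, hspT, hspt, hpsp⟩ := hsecond p hp hpt
      obtain ⟨sq, hsqT, hsqt, hqsq⟩ := hsecond q hq hqt
      have hcop : Nat.Coprime p q := (Nat.coprime_primes hp hq).mpr hpq
      by_cases hss : sp = sq
      · subst hss
        have : t ∣ sp := by
          rw [← hpqt]
          exact Nat.Coprime.mul_dvd_of_dvd_of_dvd hcop hpsp hqsq
        exact hA t ht sp hspT hspt this
      · have : t ∣ sp * sq := by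
          rw [← hpqt]
          exact mul_dvd_mul hpsp hqsq
        exact hA2 t ht sp hspT sq hsqT hspt hsqt hss this
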